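/- Let σ be an orientation-reversing Möbius involution of the Riemann sphere ℂ ∪ {∞} with no fixed points, written σ(z) = (A·conj(z) + B)/(C·conj(z) + D) with AD − BC = 1. Then B ≠ 0, C ≠ 0, the quantity B/C is a nonzero real number, C is a nonzero real number, and with L(z) = C⁻¹ z + A/C the conjugated map L⁻¹ ∘ σ ∘ L equals the antipodal map z ↦ −1/conj(z). -/

import Mathlib

open OnePoint Complex

/-- The anti-Möbius transformation `z ↦ (A·conj z + B)/(C·conj z + D)` of the Riemann
sphere `ℂ ∪ {∞}`. -/
noncomputable def antiMoebius (A B C D : ℂ) : OnePoint ℂ → OnePoint ℂ :=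
  OnePoint.rec (if C = 0 then ∞ else ((A / C : ℂ) : OnePoint ℂ))
    (fun z => if C * (starRingEnd ℂ) z + D = 0 then ∞
      else (((A * (starRingEnd ℂ) z + B) / (C * (starRingEnd ℂ) z + D) : ℂ) : OnePoint ℂ))

/-- The affine map `z ↦ a·z + b` of the Riemann sphere, fixing `∞`. -/
def affineSphere (a b : ℂ) : OnePoint ℂ → OnePoint ℂ :=
  OnePoint.rec ∞ (fun z => ((a * z + b : ℂ) : OnePoint ℂ))

/-- The antipodal map `z ↦ -1/conj z` of the Riemann sphere. -/
noncomputable def antipodal : OnePoint ℂ → OnePoint ℂ :=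
  OnePoint.rec ((0 : ℂ) : OnePoint ℂ)
    (fun z => if z = 0 then ∞ else (((-1) / (starRingEnd ℂ) z : ℂ) : OnePoint ℂ))

lemma antiMoebius_coe (A B C D z : ℂ) : antiMoebius A B C D (z : OnePoint ℂ) =
    if C * (starRingEnd ℂ) z + D = 0 then ∞
      else (((A * (starRingEnd ℂ) z + B) / (C * (starRingEnd ℂ) z + D) : ℂ) : OnePoint ℂ) := rfl

lemma antiMoebius_infty (A B C D : ℂ) : antiMoebius A B C D ∞ =
    if C = 0 then ∞ else ((A / C : ℂ) : OnePoint ℂ) := rfl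

lemma affineSphere_coe (a b z : ℂ) :
    affineSphere a b (z : OnePoint ℂ) = ((a * z + b : ℂ) : OnePoint ℂ) := rfl

lemma affineSphere_infty (a b : ℂ) : affineSphere a b ∞ = ∞ := rfl

lemma antipodal_coe (z : ℂ) : antipodal (z : OnePoint ℂ) =
    if z = 0 then ∞ else (((-1) / (starRingEnd ℂ) z : ℂ) : OnePoint ℂ) := rfl

lemma antipodal_infty : antipodal ∞ = ((0 : ℂ) : OnePoint ℂ) := rfl


/-- If `σ(z) = (A·conj z + B)/(C·conj z + D)`, with `AD − BC = 1`, is an orientation-reversing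
Möbius involution of the Riemann sphere without fixed points, then `B ≠ 0`, `C ≠ 0`, `B/C` is
a nonzero real number, `C` is a nonzero real number, and conjugating `σ` by the linear map
`L(z) = C⁻¹·z + A/C` yields the antipodal map `z ↦ −1/conj z`. -/
theorem stmt6 (A B C D : ℂ) (hdet : A * D - B * C = 1)
    (hinv : ∀ z, antiMoebius A B C D (antiMoebius A B C D z) = z)
    (hfree : ∀ z, antiMoebius A B C D z ≠ z) :
    B ≠ 0 ∧ C ≠ 0 ∧ (B / C).im = 0 ∧ C.im = 0 ∧
      ∀ z, affineSphere C (-A) (antiMoebius A B C D (affineSphere C⁻¹ (A / C) z)) =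
        antipodal z := by
  have hC : C ≠ 0 := by
    intro h
    exact hfree ∞ (by simp [antiMoebius_infty, h])
  have hCc : (starRingEnd ℂ) C ≠ 0 := by simpa using hC
  have hinf : antiMoebius A B C D ∞ = ((A / C : ℂ) : OnePoint ℂ) := by
    rw [antiMoebius_infty, if_neg hC]
  -- the relation C⋅conj A + D⋅conj C = 0
  have h2 : C * (starRingEnd ℂ) (A / C) + D = 0 := by
    by_contra h2
    have h1 := hinv ∞
    rw [hinf, antiMoebius_coe, if_neg h2] at h1
    exact OnePoint.coe_ne_infty _ h1
  have hR1 : C * (starRingEnd ℂ) A + D * (starRingEnd ℂ) C = 0 := by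
    rw [map_div₀] at h2
    field_simp at h2
    linear_combination h2
  -- key functional equation at good points
  have hkey : ∀ z : ℂ, C * (starRingEnd ℂ) z + D ≠ 0 →
      (A * (starRingEnd ℂ) A + B * (starRingEnd ℂ) C) * z
        + (A * (starRingEnd ℂ) B + B * (starRingEnd ℂ) D)
      = (C * (starRingEnd ℂ) B + D * (starRingEnd ℂ) D) * z := by
    intro z hz
    have h1 := hinv (z : OnePoint ℂ)
    rw [antiMoebius_coe, if_neg hz, antiMoebius_coe] at h1
    set w := (A * (starRingEnd ℂ) z + B) / (C * (starRingEnd ℂ) z + D) with hw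
    have hz2 : (starRingEnd ℂ) C * z + (starRingEnd ℂ) D ≠ 0 := by
      intro h
      apply hz
      have h' := congrArg (starRingEnd ℂ) h
      simpa using h'
    have hcw : (starRingEnd ℂ) w
        = ((starRingEnd ℂ) A * z + (starRingEnd ℂ) B) / ((starRingEnd ℂ) C * z + (starRingEnd ℂ) D) := by
      rw [hw]
      simp [map_div₀, map_add, map_mul]
    by_cases hd : C * (starRingEnd ℂ) w + D = 0
    · rw [if_pos hd] at h1
      exact absurd h1.symm (OnePoint.coe_ne_infty z)
    · rw [if_neg hd] at h1
      have h4 : (A * (starRingEnd ℂ) w + B) / (C * (starRingEnd ℂ) w + D) = z :=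
        OnePoint.coe_eq_coe.mp h1
      rw [div_eq_iff hd] at h4
      have e : (starRingEnd ℂ) w * ((starRingEnd ℂ) C * z + (starRingEnd ℂ) D)
          = (starRingEnd ℂ) A * z + (starRingEnd ℂ) B := by
        rw [hcw, div_mul_cancel₀ _ hz2]
      have h6 : A * ((starRingEnd ℂ) A * z + (starRingEnd ℂ) B)
            + B * ((starRingEnd ℂ) C * z + (starRingEnd ℂ) D)
          = z * (C * ((starRingEnd ℂ) A * z + (starRingEnd ℂ) B)
            + D * ((starRingEnd ℂ) C * z + (starRingEnd ℂ) D)) := by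
        linear_combination ((starRingEnd ℂ) C * z + (starRingEnd ℂ) D) * h4 - (A - z * C) * e
      linear_combination h6 + z ^ 2 * hR1
  -- extract matrix relations
  have hν : A * (starRingEnd ℂ) B + B * (starRingEnd ℂ) D = 0 := by
    by_cases hD : D = 0
    · have h1 := hkey 1 (by simp [hD, hC])
      have h2' := hkey 2 (by simp only [map_ofNat]; simp [hD, hC])
      linear_combination 2 * h1 - h2'
    · have h0 := hkey 0 (by simpa using hD)
      linear_combination h0
  have hμδ : A * (starRingEnd ℂ) A + B * (starRingEnd ℂ) C
      = C * (starRingEnd ℂ) B + D * (starRingEnd ℂ) D := by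
    by_cases hD : D = 0
    · have h1 := hkey 1 (by simp [hD, hC])
      linear_combination h1 - hν
    · by_cases h1d : C + D = 0
      · have h2' := hkey 2 (by
          simp only [map_ofNat]
          intro h; exact hC (by linear_combination h - h1d))
        linear_combination (h2' - hν) / 2
      · have h1 := hkey 1 (by simpa using h1d)
        linear_combination h1 - hν
  have hdetc : (starRingEnd ℂ) A * (starRingEnd ℂ) D - (starRingEnd ℂ) B * (starRingEnd ℂ) C = 1 := by
    have h := congrArg (starRingEnd ℂ) hdet
    simpa using h
  have hprod : (A * (starRingEnd ℂ) A + B * (starRingEnd ℂ) C)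
      * (C * (starRingEnd ℂ) B + D * (starRingEnd ℂ) D) = 1 := by
    linear_combination (A * (starRingEnd ℂ) B + B * (starRingEnd ℂ) D) * hR1
      + (A * D - B * C) * hdetc + hdet
  have hμ2 : (A * (starRingEnd ℂ) A + B * (starRingEnd ℂ) C)
      * (A * (starRingEnd ℂ) A + B * (starRingEnd ℂ) C) = 1 := by
    linear_combination hprod + (A * (starRingEnd ℂ) A + B * (starRingEnd ℂ) C) * hμδ
  have hCmu : (starRingEnd ℂ) C = -(C * (A * (starRingEnd ℂ) A + B * (starRingEnd ℂ) C)) := by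
    linear_combination (-(starRingEnd ℂ) C) * hdet + A * hR1
  rcases mul_self_eq_one_iff.mp hμ2 with hμ1 | hμ
  · -- μ = 1 : σ has the fixed point (A+i)/C, contradiction
    exfalso
    have hcc : (starRingEnd ℂ) C = -C := by linear_combination hCmu - C * hμ1
    have hDA : D = (starRingEnd ℂ) A := by
      have h : C * ((starRingEnd ℂ) A - D) = 0 := by linear_combination hR1 - D * hcc
      have := (mul_eq_zero.mp h).resolve_left hC
      linear_combination -this
    have hBC : B * C = A * (starRingEnd ℂ) A - 1 := by
      linear_combination B * hcc - hμ1
    set z₀ : ℂ := (A + I) / C with hz₀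
    have hcz : (starRingEnd ℂ) z₀ = ((starRingEnd ℂ) A - I) / ((starRingEnd ℂ) C) := by
      rw [hz₀, map_div₀, map_add, Complex.conj_I]
      ring_nf
    have hden : C * (starRingEnd ℂ) z₀ + D = I := by
      rw [hcz, hcc, hDA]
      field_simp [hC]
      ring
    apply hfree ((z₀ : ℂ) : OnePoint ℂ)
    rw [antiMoebius_coe, if_neg (fun h => Complex.I_ne_zero (hden.symm.trans h))]
    rw [OnePoint.coe_eq_coe, hden, div_eq_iff Complex.I_ne_zero, hcz, hcc, hz₀]
    field_simp [hC]
    linear_combination hBC - Complex.I_sq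
  · -- μ = -1 : the main case
    have hcc : (starRingEnd ℂ) C = C := by linear_combination hCmu - C * hμ
    have hCim : C.im = 0 := Complex.conj_eq_iff_im.mp hcc
    have hDA : D = -(starRingEnd ℂ) A := by
      have h : C * ((starRingEnd ℂ) A + D) = 0 := by linear_combination hR1 - D * hcc
      have := (mul_eq_zero.mp h).resolve_left hC
      linear_combination this
    have hBC : B * C = -(A * (starRingEnd ℂ) A) - 1 := by
      linear_combination hμ - B * hcc
    have hBC' : B * C = -((normSq A : ℝ) : ℂ) - 1 := by
      rw [← Complex.mul_conj]; exact hBC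
    have hB : B ≠ 0 := by
      intro hB0
      rw [hB0, zero_mul] at hBC'
      have h0 : ((normSq A + 1 : ℝ) : ℂ) = 0 := by push_cast; linear_combination hBC'
      have h1 : (normSq A + 1 : ℝ) = 0 := by exact_mod_cast h0
      nlinarith [Complex.normSq_nonneg A]
    have hCre : C = ((C.re : ℝ) : ℂ) := by
      apply Complex.ext <;> simp [hCim]
    have hcne : ((C.re : ℝ) : ℂ) ≠ 0 := hCre ▸ hC
    have hcre : C.re ≠ 0 := by exact_mod_cast hcne
    have hBre : B = (((-normSq A - 1) / C.re : ℝ) : ℂ) := by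
      push_cast
      rw [eq_div_iff hcne, ← hCre]
      linear_combination hBC'
    have hBCim : (B / C).im = 0 := by
      rw [hBre, hCre, ← Complex.ofReal_div, Complex.ofReal_im]
    refine ⟨hB, hC, hBCim, hCim, ?_⟩
    intro z
    induction z using OnePoint.rec with
    | infty =>
      rw [affineSphere_infty, antiMoebius_infty, if_neg hC, affineSphere_coe, antipodal_infty,
        OnePoint.coe_eq_coe]
      field_simp
      ring
    | coe w =>
      rw [affineSphere_coe, antiMoebius_coe]
      have hcu : C * (starRingEnd ℂ) (C⁻¹ * w + A / C) + D = (starRingEnd ℂ) w := by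
        rw [map_add, map_mul, map_inv₀, map_div₀, hcc, hDA]
        field_simp
        ring
      rw [hcu]
      by_cases hw0 : w = 0
      · rw [if_pos (by rw [hw0, map_zero]), antipodal_coe, if_pos hw0, affineSphere_infty]
      · have hcw0 : (starRingEnd ℂ) w ≠ 0 := by simpa using hw0
        rw [if_neg hcw0, affineSphere_coe, antipodal_coe, if_neg hw0, OnePoint.coe_eq_coe]
        rw [map_add, map_mul, map_inv₀, map_div₀, hcc]
        field_simp [hC]
        linear_combination hBC
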